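/- arXiv:2501.02547 — 4 statements merged into one kernel-verified Lean document; each statement's English description precedes it below -/
import Mathlib

section
/- Let n ≥ 1, let z ∈ ℝⁿ, let I ⊆ {1,…,n} be nonempty, and suppose there are a ∈ ℝ and c ≥ 0 such that z_i = a for all i ∈ I and z_j ≤ a − c for all j ∉ I. Let u ∈ ℝⁿ be the uniform distribution on I, i.e. u_k = 1/|I| if k ∈ I and u_k = 0 otherwise. Then max_{1 ≤ k ≤ n} |softmax(z)_k − u_k| ≤ n·e^{−c}. -/
open BigOperators

noncomputable section

/-- The softmax function on `ℝⁿ`: `softmax(z)_k = e^{z_k} / Σ_l e^{z_l}`. -/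
def softmax {n : ℕ} (z : Fin n → ℝ) (k : Fin n) : ℝ :=
  Real.exp (z k) / ∑ l, Real.exp (z l)

/-- If `z` equals `a` on a nonempty set `I` and is at most `a − c`
(with `c ≥ 0`) off `I`, then softmax of `z` is entrywise within `n·e^{−c}` of the
uniform distribution on `I`. -/
theorem softmax_close_to_uniform
    (n : ℕ) (hn : 1 ≤ n) (z : Fin n → ℝ) (I : Finset (Fin n)) (hI : I.Nonempty)
    (a c : ℝ) (hc : 0 ≤ c)
    (hza : ∀ i ∈ I, z i = a) (hzc : ∀ j ∉ I, z j ≤ a - c) :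
    ∀ k : Fin n,
      |softmax z k - (if k ∈ I then 1 / (I.card : ℝ) else 0)| ≤ n * Real.exp (-c) := by
  intro k
  set S := ∑ l, Real.exp (z l) with hS
  set R := ∑ l ∈ Iᶜ, Real.exp (z l) with hR
  have hm1 : 1 ≤ (I.card : ℝ) := by
    exact_mod_cast Finset.one_le_card.mpr hI
  have hm0 : (0:ℝ) < I.card := lt_of_lt_of_le one_pos hm1
  have hsplit : S = I.card * Real.exp a + R := by
    rw [hS, ← Finset.sum_add_sum_compl I]
    congr 1
    rw [Finset.sum_congr rfl (fun i hi => by rw [hza i hi])]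
    simp [mul_comm]
  have hR0 : 0 ≤ R := Finset.sum_nonneg fun i _ => (Real.exp_pos _).le
  have hRle : R ≤ n * Real.exp (a - c) := by
    calc R ≤ ∑ l ∈ Iᶜ, Real.exp (a - c) :=
          Finset.sum_le_sum fun i hi =>
            Real.exp_le_exp.mpr (hzc i (Finset.mem_compl.mp hi))
      _ = Iᶜ.card * Real.exp (a - c) := by simp [mul_comm]
      _ ≤ n * Real.exp (a - c) := by
          apply mul_le_mul_of_nonneg_right _ (Real.exp_pos _).le
          exact_mod_cast (Finset.card_le_card (Finset.subset_univ _)).trans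
            (le_of_eq (by simp))
  have hSge : I.card * Real.exp a ≤ S := by
    rw [hsplit]; linarith
  have hSgea : Real.exp a ≤ S := by
    nlinarith [Real.exp_pos a]
  have hSpos : 0 < S := lt_of_lt_of_le (Real.exp_pos a) hSgea
  have key : Real.exp (a - c) / Real.exp a = Real.exp (-c) := by
    rw [Real.exp_sub, Real.exp_neg]
    field_simp
  by_cases hk : k ∈ I
  · simp only [hk, if_true]
    have hzk : z k = a := hza k hk
    rw [softmax, ← hS, hzk]
    have heq : Real.exp a / S - 1 / I.card = -(R / (I.card * S)) := by
      rw [div_sub_div _ _ (ne_of_gt hSpos) (ne_of_gt hm0), neg_div',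
        mul_comm (I.card:ℝ) S]
      congr 1
      rw [hsplit]; ring
    rw [heq, abs_neg, abs_of_nonneg (by positivity)]
    have h1 : Real.exp a ≤ I.card * S := by
      nlinarith
    calc R / (I.card * S) ≤ R / Real.exp a := by
          apply div_le_div_of_nonneg_left hR0 (Real.exp_pos a) h1
      _ ≤ (n * Real.exp (a - c)) / Real.exp a := by
          gcongr
      _ = n * Real.exp (-c) := by rw [mul_div_assoc, key]
  · simp only [hk, if_false, sub_zero]
    rw [softmax, ← hS]
    rw [abs_of_nonneg (by positivity)]
    have hzk : Real.exp (z k) ≤ Real.exp (a - c) := Real.exp_le_exp.mpr (hzc k hk)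
    calc Real.exp (z k) / S ≤ Real.exp (a - c) / Real.exp a := by
          apply div_le_div₀ (Real.exp_pos _).le hzk (Real.exp_pos a) hSgea
      _ = Real.exp (-c) := key
      _ ≤ n * Real.exp (-c) := by
          nlinarith [Real.exp_pos (-c), (show (1:ℝ) ≤ n by exact_mod_cast hn)]

end
end

section
/- Let 𝒫 be a Bayesian-network structure on M variables, and define the block matrix A ∈ ℝ^{Md×(M+1)d} with d×d blocks A_{ij} (i ∈ [M], j ∈ [M+1]) given by A_{ij} = I_d if j ≤ M and i ∈ {j} ∪ 𝒫(j), and A_{ij} = 0 otherwise. Let W₁ ∈ ℝ^{(2M+1)d×(2M+1)d} be the matrix whose first Md rows are [I_{Md}, −2A] and whose remaining (M+1)d rows are zero, and let W₂ = −I_{(2M+1)d}. Then for every query index m₀ ∈ [M] and every admissible input matrix X built from one-hot context vectors, the feed-forward layer satisfies X + W₂·ReLU(W₁X) = X̃, where X̃ is the masked matrix obtained from X by replacing x_{mi} (for all i ∈ [N]) and x_{mq} by 0 for every m ∉ {m₀} ∪ 𝒫(m₀) and keeping all other entries unchanged. -/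
open Matrix BigOperators

noncomputable section

/-- Row index type for `ℝ^{(2M+1)d}`: `M` value blocks plus `M+1` positional blocks,
each of size `d`. -/
abbrev Row (M d : ℕ) := (Fin M ⊕ Fin (M + 1)) × Fin d

/-- Column index type: `N` context columns plus one query column. -/
abbrev Col (N : ℕ) := Fin N ⊕ Unit

/-- A vector in `ℝ^d` is one-hot if exactly one entry is `1` and all others are `0`. -/
def IsOneHot {d : ℕ} (v : Fin d → ℝ) : Prop :=
  ∃ j : Fin d, v = fun k => if k = j then (1 : ℝ) else 0

/-- The admissible input matrix `X ∈ ℝ^{(2M+1)d × (N+1)}`. -/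
def inputMatrix {M N d : ℕ} (x : Fin M → Fin N → Fin d → ℝ)
    (xq : Fin M → Fin d → ℝ) (m₀ : Fin M) : Matrix (Row M d) (Col N) ℝ :=
  fun r c =>
    match r, c with
    | (Sum.inl m, k), Sum.inl i => x m i k
    | (Sum.inl m, k), Sum.inr _ => xq m k
    | (Sum.inr j, _), Sum.inl _ => if (j : ℕ) = (m₀ : ℕ) then 1 else 0
    | (Sum.inr j, _), Sum.inr _ => if (j : ℕ) = (m₀ : ℕ) ∨ (j : ℕ) = M then 1 else 0

/-- The masked matrix `X̃`: entries of `X` in value block `m` are replaced by `0`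
unless `m ∈ {m₀} ∪ 𝒫(m₀)`. -/
def maskedMatrix {M N d : ℕ} (P : Fin M → Finset (Fin M))
    (x : Fin M → Fin N → Fin d → ℝ) (xq : Fin M → Fin d → ℝ) (m₀ : Fin M) :
    Matrix (Row M d) (Col N) ℝ :=
  fun r c =>
    match r with
    | (Sum.inl m, _) => if m = m₀ ∨ m ∈ P m₀ then inputMatrix x xq m₀ r c else 0
    | (Sum.inr _, _) => inputMatrix x xq m₀ r c

/-- The matrix `W₁ ∈ ℝ^{(2M+1)d×(2M+1)d}` whose first `Md` rows are `[I_{Md}, −2A]`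
(where `A` is the block matrix with `A_{ij} = I_d` iff `j ≤ M` and `i ∈ {j} ∪ 𝒫(j)`)
and whose remaining `(M+1)d` rows are zero. -/
def W1sel {M d : ℕ} (P : Fin M → Finset (Fin M)) : Matrix (Row M d) (Row M d) ℝ :=
  fun r c =>
    match r, c with
    | (Sum.inl i, k), (Sum.inl j, k') => if i = j ∧ k = k' then 1 else 0
    | (Sum.inl i, k), (Sum.inr j, k') =>
        if h : (j : ℕ) < M then
          (if (i = ⟨(j : ℕ), h⟩ ∨ i ∈ P ⟨(j : ℕ), h⟩) ∧ k = k' then -2 else 0)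
        else 0
    | (Sum.inr _, _), _ => 0


lemma W1sel_mul_entry {M N d : ℕ} (P : Fin M → Finset (Fin M))
    (x : Fin M → Fin N → Fin d → ℝ) (xq : Fin M → Fin d → ℝ) (m₀ : Fin M)
    (i : Fin M) (k : Fin d) (c : Col N) :
    ((W1sel P * inputMatrix x xq m₀ : Matrix (Row M d) (Col N) ℝ)) (Sum.inl i, k) c =
      inputMatrix x xq m₀ (Sum.inl i, k) c +
        (if i = m₀ ∨ i ∈ P m₀ then (-2 : ℝ) else 0) := by
  erw [Matrix.mul_apply]; rw [Fintype.sum_prod_type, Fintype.sum_sum_type]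
  have h1 : ∑ a : Fin M, ∑ k' : Fin d,
      W1sel P (Sum.inl i, k) (Sum.inl a, k') * inputMatrix x xq m₀ (Sum.inl a, k') c
      = inputMatrix x xq m₀ (Sum.inl i, k) c := by
    simp [W1sel, ite_and]
  have h2 : ∑ j : Fin (M + 1), ∑ k' : Fin d,
      W1sel P (Sum.inl i, k) (Sum.inr j, k') * inputMatrix x xq m₀ (Sum.inr j, k') c
      = (if i = m₀ ∨ i ∈ P m₀ then (-2 : ℝ) else 0) := by
    rw [Fin.sum_univ_castSucc]
    have hlast : ∑ k' : Fin d,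
        W1sel P (Sum.inl i, k) (Sum.inr (Fin.last M), k') *
          inputMatrix x xq m₀ (Sum.inr (Fin.last M), k') c = 0 := by
      simp [W1sel]
    rw [hlast, add_zero]
    have hterm : ∀ (j : Fin M) (k' : Fin d),
        W1sel P (Sum.inl i, k) (Sum.inr (Fin.castSucc j), k') *
          inputMatrix x xq m₀ (Sum.inr (Fin.castSucc j), k') c
        = (if (i = j ∨ i ∈ P j) ∧ k = k' then (-2 : ℝ) else 0) *
            (if j = m₀ then 1 else 0) := by
      intro j k'
      have hj : ((Fin.castSucc j : Fin (M + 1)) : ℕ) < M := j.isLt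
      have hjM : ((Fin.castSucc j : Fin (M + 1)) : ℕ) ≠ M := Nat.ne_of_lt j.isLt
      have hjeq : (⟨((Fin.castSucc j : Fin (M + 1)) : ℕ), hj⟩ : Fin M) = j := by
        ext; simp
      have hval : (j : ℕ) = (m₀ : ℕ) ↔ j = m₀ := Fin.val_eq_val j m₀
      have hjM' : (j : ℕ) ≠ M := Nat.ne_of_lt j.isLt
      cases c with
      | inl n => simp [W1sel, inputMatrix, hj, hjeq, hval]
      | inr u => simp [W1sel, inputMatrix, hj, hjeq, hval, hjM']
    simp only [hterm]
    simp [ite_and, mul_ite, Finset.sum_ite_eq']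
  rw [h1, h2]

/-- With `W₁` as above and `W₂ = −I_{(2M+1)d}`, the feed-forward layer
`X + W₂·ReLU(W₁X)` maps every admissible input matrix to the masked matrix `X̃`. -/
theorem feedforward_masks_nonparents
    (M N d : ℕ) (hM : 1 ≤ M) (hN : 1 ≤ N) (hd : 1 ≤ d)
    (P : Fin M → Finset (Fin M))
    (hP : ∀ m : Fin M, ∀ m' ∈ P m, m' < m)
    (m₀ : Fin M) (x : Fin M → Fin N → Fin d → ℝ) (xq : Fin M → Fin d → ℝ)
    (hx : ∀ m i, IsOneHot (x m i))
    (hxq1 : ∀ m, m < m₀ → IsOneHot (xq m))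
    (hxq2 : ∀ m, m₀ ≤ m → xq m = 0) :
    inputMatrix x xq m₀ +
        ((-(1 : Matrix (Row M d) (Row M d) ℝ)) *
          (Matrix.map (W1sel P * inputMatrix x xq m₀) fun z => max z 0) : Matrix (Row M d) (Col N) ℝ) =
      maskedMatrix P x xq m₀ := by
  erw [Matrix.neg_mul, Matrix.one_mul]
  funext r c
  obtain ⟨ri, k⟩ := r
  cases ri with
  | inr j =>
      have hz : ((W1sel P * inputMatrix x xq m₀ : Matrix (Row M d) (Col N) ℝ)) (Sum.inr j, k) c = 0 := by
        erw [Matrix.mul_apply]; simp [W1sel]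
      simp [Matrix.add_apply, Matrix.neg_apply, Matrix.map_apply, hz, maskedMatrix]
  | inl i =>
      have key := W1sel_mul_entry P x xq m₀ i k c
      set v := inputMatrix x xq m₀ (Sum.inl i, k) c with hv
      have hv0 : 0 ≤ v ∧ v ≤ 1 := by
        cases c with
        | inl n =>
            obtain ⟨j0, hj⟩ := hx i n
            rw [hv]; simp only [inputMatrix, hj]
            constructor <;> split <;> norm_num
        | inr u =>
            by_cases h : i < m₀
            · obtain ⟨j0, hj⟩ := hxq1 i h
              rw [hv]; simp only [inputMatrix, hj]
              constructor <;> split <;> norm_num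
            · have h2 := hxq2 i (le_of_not_gt h)
              rw [hv]; simp [inputMatrix, h2]
      simp only [Matrix.add_apply, Matrix.neg_apply, Matrix.map_apply, key,
        maskedMatrix, ← hv]
      by_cases hcond : i = m₀ ∨ i ∈ P m₀
      · have : max (v + -2) 0 = 0 := max_eq_right (by linarith [hv0.2])
        simp [hcond, this]
      · have : max v 0 = v := max_eq_left hv0.1
        simp [hcond, this]


end
end

section
/- Let c > 0 and define K = √c·[I_{Md}, 0_{Md×Md}, 0_{Md×d}; 0_{d×Md}, 0_{d×Md}, I_d] and Q = √c·[I_{Md}, 0_{Md×Md}, 0_{Md×d}; 0_{d×Md}, 0_{d×Md}, −I_d], both in ℝ^{(M+1)d×(2M+1)d}. Let X̃ be the masked matrix of an admissible input for query index m₀, with columns x̃_i (i ∈ [N]) and last column x̃_q. Then for every i ∈ [N], (K x̃_i)ᵀ(Q x̃_q) = c·|{m ∈ 𝒫(m₀) : x_{mi} = x_{mq}}|, and (K x̃_q)ᵀ(Q x̃_q) = c·(|𝒫(m₀)| − d). -/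
open Matrix BigOperators

noncomputable section

/-- Row index type for `ℝ^{(M+1)d}`: `M` blocks of size `d` plus one extra block. -/
abbrev KRow (M d : ℕ) := (Fin M ⊕ Unit) × Fin d

/-- The key matrix `K = √c·[I_{Md}, 0, 0; 0, 0, I_d] ∈ ℝ^{(M+1)d×(2M+1)d}`. -/
def Kmat (M d : ℕ) (c : ℝ) : Matrix (KRow M d) (Row M d) ℝ :=
  fun r col =>
    match r, col with
    | (Sum.inl i, k), (Sum.inl j, k') => if i = j ∧ k = k' then Real.sqrt c else 0
    | (Sum.inl _, _), (Sum.inr _, _) => 0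
    | (Sum.inr _, k), (Sum.inr j, k') => if (j : ℕ) = M ∧ k = k' then Real.sqrt c else 0
    | (Sum.inr _, _), (Sum.inl _, _) => 0

/-- The query matrix `Q = √c·[I_{Md}, 0, 0; 0, 0, −I_d] ∈ ℝ^{(M+1)d×(2M+1)d}`. -/
def Qmat (M d : ℕ) (c : ℝ) : Matrix (KRow M d) (Row M d) ℝ :=
  fun r col =>
    match r, col with
    | (Sum.inl i, k), (Sum.inl j, k') => if i = j ∧ k = k' then Real.sqrt c else 0
    | (Sum.inl _, _), (Sum.inr _, _) => 0
    | (Sum.inr _, k), (Sum.inr j, k') => if (j : ℕ) = M ∧ k = k' then -Real.sqrt c else 0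
    | (Sum.inr _, _), (Sum.inl _, _) => 0

lemma onehot_dot {d : ℕ} {u v : Fin d → ℝ} (hu : IsOneHot u) (hv : IsOneHot v) :
    ∑ k, u k * v k = if u = v then 1 else 0 := by
  obtain ⟨j, rfl⟩ := hu; obtain ⟨j', rfl⟩ := hv
  by_cases h : j = j'
  · subst h; simp [Finset.sum_ite_eq']
  · have : ¬ ((fun k => if k = j then (1:ℝ) else 0) = fun k => if k = j' then 1 else 0) := by
      intro he
      have := congrFun he j
      simp [h] at this
    simp only [this, if_false]
    rw [Finset.sum_eq_zero]
    intro k _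
    by_cases hk : k = j <;> by_cases hk' : k = j' <;> simp_all

lemma onehot_sq {d : ℕ} {u : Fin d → ℝ} (hu : IsOneHot u) :
    ∑ k, u k * u k = 1 := by
  rw [onehot_dot hu hu]; simp

lemma Kmul_inl {M d : ℕ} (c : ℝ) (v : Row M d → ℝ) (a : Fin M) (k : Fin d) :
    (Kmat M d c).mulVec v (Sum.inl a, k) = Real.sqrt c * v (Sum.inl a, k) := by
  simp [mulVec, dotProduct, Kmat, Fintype.sum_prod_type, Fintype.sum_sum_type,
    ite_and, mul_ite, ite_mul, Finset.sum_ite_eq, Finset.sum_ite_eq']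

lemma Kmul_inr {M d : ℕ} (c : ℝ) (v : Row M d → ℝ) (k : Fin d) :
    (Kmat M d c).mulVec v (Sum.inr (), k) = Real.sqrt c * v (Sum.inr (Fin.last M), k) := by
  simp only [mulVec, dotProduct, Kmat, Fintype.sum_prod_type, Fintype.sum_sum_type]
  rw [Finset.sum_eq_single (Fin.last M)]
  · simp [ite_and, mul_ite, ite_mul, Finset.sum_ite_eq, Finset.sum_ite_eq', Fin.last]
  · intro b _ hb
    have : (b : ℕ) ≠ M := fun h => hb (Fin.ext h)
    simp [this]
  · simp

lemma Qmul_inl {M d : ℕ} (c : ℝ) (v : Row M d → ℝ) (a : Fin M) (k : Fin d) :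
    (Qmat M d c).mulVec v (Sum.inl a, k) = Real.sqrt c * v (Sum.inl a, k) := by
  simp [mulVec, dotProduct, Qmat, Fintype.sum_prod_type, Fintype.sum_sum_type,
    ite_and, mul_ite, ite_mul, Finset.sum_ite_eq, Finset.sum_ite_eq']

lemma Qmul_inr {M d : ℕ} (c : ℝ) (v : Row M d → ℝ) (k : Fin d) :
    (Qmat M d c).mulVec v (Sum.inr (), k) = -(Real.sqrt c * v (Sum.inr (Fin.last M), k)) := by
  simp only [mulVec, dotProduct, Qmat, Fintype.sum_prod_type, Fintype.sum_sum_type]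
  rw [Finset.sum_eq_single (Fin.last M)]
  · simp [ite_and, mul_ite, ite_mul, Finset.sum_ite_eq, Finset.sum_ite_eq', Fin.last]
  · intro b _ hb
    have : (b : ℕ) ≠ M := fun h => hb (Fin.ext h)
    simp [this]
  · simp

lemma KQ_dot {M d : ℕ} {c : ℝ} (hc : 0 ≤ c) (v w : Row M d → ℝ) :
    (Kmat M d c).mulVec v ⬝ᵥ (Qmat M d c).mulVec w =
      c * ((∑ a : Fin M, ∑ k : Fin d, v (Sum.inl a, k) * w (Sum.inl a, k)) -
        ∑ k : Fin d, v (Sum.inr (Fin.last M), k) * w (Sum.inr (Fin.last M), k)) := by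
  simp only [dotProduct, Fintype.sum_prod_type, Fintype.sum_sum_type]
  have hrw : ∀ (a : Fin M) (k : Fin d),
      (Kmat M d c).mulVec v (Sum.inl a, k) * (Qmat M d c).mulVec w (Sum.inl a, k) =
        c * (v (Sum.inl a, k) * w (Sum.inl a, k)) := by
    intro a k
    rw [Kmul_inl, Qmul_inl]
    rw [show Real.sqrt c * v (Sum.inl a, k) * (Real.sqrt c * w (Sum.inl a, k)) =
      (Real.sqrt c * Real.sqrt c) * (v (Sum.inl a, k) * w (Sum.inl a, k)) by ring,
      Real.mul_self_sqrt hc]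
  have hrw2 : ∀ (k : Fin d),
      (Kmat M d c).mulVec v (Sum.inr (), k) * (Qmat M d c).mulVec w (Sum.inr (), k) =
        -(c * (v (Sum.inr (Fin.last M), k) * w (Sum.inr (Fin.last M), k))) := by
    intro k
    rw [Kmul_inr, Qmul_inr]
    rw [show Real.sqrt c * v (Sum.inr (Fin.last M), k) *
      -(Real.sqrt c * w (Sum.inr (Fin.last M), k)) =
      -((Real.sqrt c * Real.sqrt c) * (v (Sum.inr (Fin.last M), k) * w (Sum.inr (Fin.last M), k)))
      by ring, Real.mul_self_sqrt hc]
  simp only [hrw, hrw2]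
  simp only [Finset.sum_neg_distrib, ← Finset.mul_sum]
  rw [show (Finset.univ : Finset Unit) = {()} from rfl, Finset.sum_singleton]
  ring

open Classical in
/-- With `K`, `Q` as above and `X̃` the masked matrix of an admissible
input for query index `m₀`: for every context column `i`,
`(K x̃_i)ᵀ(Q x̃_q) = c·|{m ∈ 𝒫(m₀) : x_{mi} = x_{mq}}|`, and
`(K x̃_q)ᵀ(Q x̃_q) = c·(|𝒫(m₀)| − d)`. -/
theorem key_query_attention_scores
    (M N d : ℕ) (hM : 1 ≤ M) (hN : 1 ≤ N) (hd : 1 ≤ d) (c : ℝ) (hc : 0 < c)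
    (P : Fin M → Finset (Fin M))
    (hP : ∀ m : Fin M, ∀ m' ∈ P m, m' < m)
    (m₀ : Fin M) (x : Fin M → Fin N → Fin d → ℝ) (xq : Fin M → Fin d → ℝ)
    (hx : ∀ m i, IsOneHot (x m i))
    (hxq1 : ∀ m, m < m₀ → IsOneHot (xq m))
    (hxq2 : ∀ m, m₀ ≤ m → xq m = 0) :
    (∀ i : Fin N,
      (Kmat M d c).mulVec (fun r => maskedMatrix P x xq m₀ r (Sum.inl i)) ⬝ᵥ
          (Qmat M d c).mulVec (fun r => maskedMatrix P x xq m₀ r (Sum.inr ())) =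
        c * (((P m₀).filter fun m => x m i = xq m).card : ℝ)) ∧
    (Kmat M d c).mulVec (fun r => maskedMatrix P x xq m₀ r (Sum.inr ())) ⬝ᵥ
        (Qmat M d c).mulVec (fun r => maskedMatrix P x xq m₀ r (Sum.inr ())) =
      c * (((P m₀).card : ℝ) - d) := by
  have hm0P : m₀ ∉ P m₀ := fun h => lt_irrefl m₀ (hP m₀ m₀ h)
  have hlastne : ¬ (M = (m₀ : ℕ)) := by
    have := m₀.isLt; omega
  have hfilter : (Finset.univ.filter fun m : Fin M => m = m₀ ∨ m ∈ P m₀)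
      = insert m₀ (P m₀) := by
    ext m; simp
  constructor
  · intro i
    rw [KQ_dot hc.le]
    have key : (∑ a : Fin M, ∑ k : Fin d,
        (fun r => maskedMatrix P x xq m₀ r (Sum.inl i)) (Sum.inl a, k) *
        (fun r => maskedMatrix P x xq m₀ r (Sum.inr ())) (Sum.inl a, k)) =
        (((P m₀).filter fun m => x m i = xq m).card : ℝ) := by
      have step : ∀ a : Fin M, (∑ k : Fin d,
          (fun r => maskedMatrix P x xq m₀ r (Sum.inl i)) (Sum.inl a, k) *
          (fun r => maskedMatrix P x xq m₀ r (Sum.inr ())) (Sum.inl a, k)) =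
          if a = m₀ ∨ a ∈ P m₀ then ∑ k : Fin d, x a i k * xq a k else 0 := by
        intro a
        by_cases h : a = m₀ ∨ a ∈ P m₀
        · simp [maskedMatrix, inputMatrix, h]
        · simp [maskedMatrix, inputMatrix, h]
      rw [Finset.sum_congr rfl (fun a _ => step a)]
      rw [← Finset.sum_filter, hfilter, Finset.sum_insert hm0P, hxq2 m₀ le_rfl]
      simp only [Pi.zero_apply, mul_zero, Finset.sum_const_zero, zero_add]
      rw [Finset.sum_congr rfl (fun m hm => onehot_dot (hx m i) (hxq1 m (hP m₀ m hm)))]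
      rw [Finset.sum_boole]
    have hB : (∑ k : Fin d,
        (fun r => maskedMatrix P x xq m₀ r (Sum.inl i)) (Sum.inr (Fin.last M), k) *
        (fun r => maskedMatrix P x xq m₀ r (Sum.inr ())) (Sum.inr (Fin.last M), k)) = 0 := by
      simp [maskedMatrix, inputMatrix, hlastne]
    rw [key, hB]
    ring
  · rw [KQ_dot hc.le]
    have key : (∑ a : Fin M, ∑ k : Fin d,
        (fun r => maskedMatrix P x xq m₀ r (Sum.inr ())) (Sum.inl a, k) *
        (fun r => maskedMatrix P x xq m₀ r (Sum.inr ())) (Sum.inl a, k)) =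
        (((P m₀).card : ℝ)) := by
      have step : ∀ a : Fin M, (∑ k : Fin d,
          (fun r => maskedMatrix P x xq m₀ r (Sum.inr ())) (Sum.inl a, k) *
          (fun r => maskedMatrix P x xq m₀ r (Sum.inr ())) (Sum.inl a, k)) =
          if a = m₀ ∨ a ∈ P m₀ then ∑ k : Fin d, xq a k * xq a k else 0 := by
        intro a
        by_cases h : a = m₀ ∨ a ∈ P m₀
        · simp [maskedMatrix, inputMatrix, h]
        · simp [maskedMatrix, inputMatrix, h]
      rw [Finset.sum_congr rfl (fun a _ => step a)]
      rw [← Finset.sum_filter, hfilter, Finset.sum_insert hm0P, hxq2 m₀ le_rfl]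
      simp only [Pi.zero_apply, mul_zero, Finset.sum_const_zero, zero_add]
      rw [Finset.sum_congr rfl (fun m hm => onehot_sq (hxq1 m (hP m₀ m hm)))]
      simp
    have hB : (∑ k : Fin d,
        (fun r => maskedMatrix P x xq m₀ r (Sum.inr ())) (Sum.inr (Fin.last M), k) *
        (fun r => maskedMatrix P x xq m₀ r (Sum.inr ())) (Sum.inr (Fin.last M), k)) = (d : ℝ) := by
      simp [maskedMatrix, inputMatrix, Fin.last]
    rw [key, hB]


end
end

section
/- Let X̃ be the masked matrix of an admissible input for query index m₀, with columns x̃_i (i ∈ [N]) and last column x̃_q, and suppose I(m₀) = {i ∈ [N] : x_{mi} = x_{mq} for all m ∈ 𝒫(m₀)} is nonempty. Then x̃_q − (1/|I(m₀)|)·Σ_{i∈I(m₀)} x̃_i = [0_{(m₀−1)d}; −p^{MLE}_{m₀}; 0_{(2M−m₀)d}; 1_d] ∈ ℝ^{(2M+1)d}, where p^{MLE}_{m₀} = (1/|I(m₀)|)·Σ_{i∈I(m₀)} x_{m₀ i}. -/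
open Matrix BigOperators

noncomputable section

open Classical in
/-- `I(m₀)`: indices of context samples matching the query on all parents of `m₀`. -/
def Iset {M N d : ℕ} (P : Fin M → Finset (Fin M))
    (x : Fin M → Fin N → Fin d → ℝ) (xq : Fin M → Fin d → ℝ) (m₀ : Fin M) :
    Finset (Fin N) :=
  Finset.univ.filter fun i => ∀ m ∈ P m₀, x m i = xq m

/-- The vector `[0_{(m₀−1)d}; −p; 0_{(2M−m₀)d}; 1_d] ∈ ℝ^{(2M+1)d}` with
`p = (1/|I(m₀)|)·Σ_{i∈I(m₀)} x_{m₀ i}`. -/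
def xhatAvg {M N d : ℕ} (P : Fin M → Finset (Fin M))
    (x : Fin M → Fin N → Fin d → ℝ) (xq : Fin M → Fin d → ℝ) (m₀ : Fin M) :
    Row M d → ℝ :=
  fun r =>
    match r with
    | (Sum.inl m, k) =>
        if m = m₀ then -((∑ i ∈ Iset P x xq m₀, x m₀ i k) / ((Iset P x xq m₀).card : ℝ))
        else 0
    | (Sum.inr j, _) => if (j : ℕ) = M then 1 else 0

/-- If `I(m₀)` is nonempty, then the query column of the masked matrix
minus the average of the masked context columns over `I(m₀)` equals
`[0; −p^{MLE}_{m₀}; 0; 1_d]` with `p^{MLE}_{m₀}` the average of the `x_{m₀ i}`, `i ∈ I(m₀)`. -/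
theorem masked_query_minus_average
    (M N d : ℕ) (hM : 1 ≤ M) (hN : 1 ≤ N) (hd : 1 ≤ d)
    (P : Fin M → Finset (Fin M))
    (hP : ∀ m : Fin M, ∀ m' ∈ P m, m' < m)
    (m₀ : Fin M) (x : Fin M → Fin N → Fin d → ℝ) (xq : Fin M → Fin d → ℝ)
    (hx : ∀ m i, IsOneHot (x m i))
    (hxq1 : ∀ m, m < m₀ → IsOneHot (xq m))
    (hxq2 : ∀ m, m₀ ≤ m → xq m = 0)
    (hne : (Iset P x xq m₀).Nonempty) :
    (fun r => maskedMatrix P x xq m₀ r (Sum.inr ()) -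
        (∑ i ∈ Iset P x xq m₀, maskedMatrix P x xq m₀ r (Sum.inl i)) /
          ((Iset P x xq m₀).card : ℝ)) =
      xhatAvg P x xq m₀ := by
  have hcard : ((Iset P x xq m₀).card : ℝ) ≠ 0 :=
    Nat.cast_ne_zero.mpr (Finset.card_ne_zero.mpr hne)
  funext r
  obtain ⟨m | j, k⟩ := r
  · by_cases hm : m = m₀
    · simp [hm, maskedMatrix, inputMatrix, xhatAvg, hxq2 m₀ le_rfl, neg_div]
    · by_cases hp : m ∈ P m₀
      · have hsum : (∑ i ∈ Iset P x xq m₀, x m i k)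
            = ((Iset P x xq m₀).card : ℝ) * xq m k := by
          rw [Finset.sum_congr rfl (fun i hi => ?_), Finset.sum_const, nsmul_eq_mul]
          exact congrFun ((Finset.mem_filter.mp hi).2 m hp) k
        simp only [maskedMatrix, inputMatrix, xhatAvg, if_neg hm, if_pos (Or.inr hp)]
        rw [hsum, mul_div_cancel_left₀ _ hcard, sub_self]
      · have : ¬(m = m₀ ∨ m ∈ P m₀) := by tauto
        simp [maskedMatrix, inputMatrix, xhatAvg, hm, hp, this]
  · simp only [maskedMatrix, inputMatrix, xhatAvg, Finset.sum_const, nsmul_eq_mul]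
    rw [mul_div_cancel_left₀ _ hcard]
    have hlt : (m₀ : ℕ) < M := m₀.isLt
    by_cases hj : (j : ℕ) = (m₀ : ℕ)
    · have hjM : (j : ℕ) ≠ M := by omega
      simp [hj, hjM, hlt.ne]
    · by_cases hjM : (j : ℕ) = M <;> simp [hj, hjM, hlt.ne, hlt.ne']

end
end
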